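/- arXiv:2511.19825 — 4 statements merged into one kernel-verified Lean document; each statement's English description precedes it below -/
import Mathlib

section
/- Let S be a finite-dimensional K-algebra with idempotent e, H = eSe, F(M) = eM, G(N) = Hom_H(eS, N), and let {S_λ}_{λ∈Λ} be H-modules with R¹G(S_λ) = 0 for all λ (where R¹G(N) = Ext¹_H(eS, N)). Set Δ(λ) := G(S_λ). Then an H-module N has a filtration with subquotients among {S_λ} if and only if G(N) has a filtration with subquotients among {Δ(λ)}. -/
/-! Corner ring `eSe` of an idempotent `e` in a ring `S`, the Schur functor
`F : M ↦ eM` and the inverse Schur functor `G : N ↦ Hom_{eSe}(eS, N)`. -/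

section Corner

variable {S : Type} [Ring S] {e : S}

/-- The corner ring `eSe = {x : S | e * x * e = x}` of an idempotent `e`. -/
def Corner (he : e * e = e) : Type := {x : S // e * x * e = x}

namespace Corner

variable {he : e * e = e}

theorem e_mul (x : Corner he) : e * x.1 = x.1 := by
  conv_lhs => rw [← x.2, ← mul_assoc, ← mul_assoc, he]
  rw [x.2]

theorem mul_e (x : Corner he) : x.1 * e = x.1 := by
  conv_lhs => rw [← x.2, mul_assoc, mul_assoc, he, ← mul_assoc]
  rw [x.2]

instance : Zero (Corner he) := ⟨⟨0, by simp⟩⟩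
instance : Add (Corner he) :=
  ⟨fun x y => ⟨x.1 + y.1, by rw [mul_add, add_mul, x.2, y.2]⟩⟩
instance : Neg (Corner he) := ⟨fun x => ⟨-x.1, by rw [mul_neg, neg_mul, x.2]⟩⟩
instance : Mul (Corner he) :=
  ⟨fun x y => ⟨x.1 * y.1, by
    rw [show e * (x.1 * y.1) * e = (e * x.1) * (y.1 * e) by noncomm_ring,
      e_mul x, mul_e y]⟩⟩
instance : One (Corner he) := ⟨⟨e, by rw [he, he]⟩⟩

instance instRing : Ring (Corner he) where
  add_assoc a b c := Subtype.ext (add_assoc _ _ _)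
  zero_add a := Subtype.ext (zero_add _)
  add_zero a := Subtype.ext (add_zero _)
  add_comm a b := Subtype.ext (add_comm _ _)
  neg_add_cancel a := Subtype.ext (neg_add_cancel _)
  mul_assoc a b c := Subtype.ext (mul_assoc _ _ _)
  one_mul a := Subtype.ext (e_mul a)
  mul_one a := Subtype.ext (mul_e a)
  left_distrib a b c := Subtype.ext (left_distrib _ _ _)
  right_distrib a b c := Subtype.ext (right_distrib _ _ _)
  zero_mul a := Subtype.ext (zero_mul _)
  mul_zero a := Subtype.ext (mul_zero _)
  nsmul := nsmulRec
  zsmul := zsmulRec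

end Corner

variable (he : e * e = e)

/-- The additive subgroup `eM = {m | e • m = m}` of an `S`-module `M`. -/
def fixSubgroup (M : Type) [AddCommGroup M] [Module S M] : AddSubgroup M where
  carrier := {m | e • m = m}
  zero_mem' := smul_zero e
  add_mem' := by
    intro a b ha hb
    have ha' : e • a = a := ha
    have hb' : e • b = b := hb
    show e • (a + b) = a + b
    rw [smul_add, ha', hb']
  neg_mem' := by
    intro a ha
    have ha' : e • a = a := ha
    show e • (-a) = -a
    rw [smul_neg, ha']

/-- The Schur functor on objects: `F(M) = eM`, an `eSe`-module. -/
def SchurF (M : Type) [AddCommGroup M] [Module S M] : Type := ↥(fixSubgroup (e := e) M)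

instance (M : Type) [AddCommGroup M] [Module S M] : AddCommGroup (SchurF (e := e) M) :=
  inferInstanceAs (AddCommGroup ↥(fixSubgroup (e := e) M))

instance (M : Type) [AddCommGroup M] [Module S M] :
    Module (Corner he) (SchurF (e := e) M) where
  smul c m := ⟨c.1 • m.1, by
    show e • (c.1 • m.1) = c.1 • m.1
    rw [← mul_smul, Corner.e_mul c]⟩
  one_smul m := Subtype.ext m.2
  mul_smul c c' m := Subtype.ext (mul_smul c.1 c'.1 m.1)
  smul_zero c := Subtype.ext (smul_zero c.1)
  smul_add c m m' := Subtype.ext (smul_add c.1 m.1 m'.1)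
  add_smul c c' m := Subtype.ext (add_smul c.1 c'.1 m.1)
  zero_smul m := Subtype.ext (zero_smul S m.1)

/-- `eS` as a left `eSe`-module (special case of `SchurF` with `M = S`). -/
abbrev ES : Type := SchurF (e := e) S

theorem ES.e_mul' (s : ES (e := e)) : e * s.1 = s.1 := s.2

/-- An element `s * a` of `eS`, for `s ∈ eS` and `a ∈ S`. -/
def ES.mulRight (s : ES (e := e)) (a : S) : ES (e := e) :=
  ⟨s.1 * a, show e • (s.1 * a) = s.1 * a by
    show e * (s.1 * a) = s.1 * a
    rw [← mul_assoc, ES.e_mul' s]⟩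

/-- The inverse Schur functor on objects: `G(N) = Hom_{eSe}(eS, N)`. -/
abbrev SchurG (N : Type) [AddCommGroup N] [Module (Corner he) N] : Type :=
  ES (e := e) →ₗ[Corner he] N

/-- The left `S`-module structure on `G(N) = Hom_{eSe}(eS, N)`, coming from the
right multiplication action of `S` on `eS`:  `(a • φ)(s) = φ(s * a)`. -/
noncomputable instance (N : Type) [AddCommGroup N] [Module (Corner he) N] :
    Module S (SchurG he N) where
  smul a φ :=
    { toFun := fun s => φ (s.mulRight a)
      map_add' := by
        intro s s'
        show φ ((s + s').mulRight a) = φ (s.mulRight a) + φ (s'.mulRight a)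
        rw [← map_add]
        congr 1
        apply Subtype.ext
        show (s.1 + s'.1) * a = s.1 * a + s'.1 * a
        exact add_mul _ _ _
      map_smul' := by
        intro c s
        show φ ((c • s).mulRight a) = (RingHom.id (Corner he)) c • φ (s.mulRight a)
        rw [RingHom.id_apply, ← map_smul]
        congr 1
        apply Subtype.ext
        show (c.1 * s.1) * a = c.1 * (s.1 * a)
        exact mul_assoc _ _ _ }
  one_smul φ := by
    apply LinearMap.ext; intro s
    show φ _ = φ s
    congr 1
    exact Subtype.ext (mul_one s.1)
  mul_smul a b φ := by
    apply LinearMap.ext; intro s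
    show φ _ = φ _
    congr 1
    exact Subtype.ext (mul_assoc s.1 a b).symm
  smul_zero a := by
    apply LinearMap.ext; intro s
    rfl
  smul_add a φ ψ := by
    apply LinearMap.ext; intro s
    rfl
  add_smul a b φ := by
    apply LinearMap.ext; intro s
    show φ _ = φ _ + φ _
    rw [← map_add]
    congr 1
    exact Subtype.ext (mul_add s.1 a b)
  zero_smul φ := by
    apply LinearMap.ext; intro s
    show φ (ES.mulRight s 0) = 0
    have h0 : ES.mulRight (e := e) s 0 = 0 := Subtype.ext (mul_zero s.1)
    rw [h0, map_zero]

/-- The Schur functor on morphisms (restriction of `f` to `eM → eM'`). -/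
def SchurF.map {M M' : Type} [AddCommGroup M] [Module S M] [AddCommGroup M'] [Module S M']
    (f : M →ₗ[S] M') : SchurF (e := e) M →ₗ[Corner he] SchurF (e := e) M' where
  toFun m := ⟨f m.1, show e • f m.1 = f m.1 by rw [← map_smul, m.2]⟩
  map_add' m m' := Subtype.ext (map_add f m.1 m'.1)
  map_smul' c m := Subtype.ext (map_smul f c.1 m.1)

/-- The inverse Schur functor on morphisms (postcomposition with `u`). -/
noncomputable def SchurG.map {N N' : Type} [AddCommGroup N] [Module (Corner he) N]
    [AddCommGroup N'] [Module (Corner he) N'] (u : N →ₗ[Corner he] N') :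
    SchurG he N →ₗ[S] SchurG he N' where
  toFun φ := u.comp φ
  map_add' φ ψ := LinearMap.ext fun s => map_add u _ _
  map_smul' a φ := rfl

end Corner

/-- An extension `0 → B → E → A → 0` of modules over a ring `H`. -/
structure ModuleExtension (H A B : Type) [Ring H]
    [AddCommGroup A] [Module H A] [AddCommGroup B] [Module H B] where
  E : Type
  [addE : AddCommGroup E]
  [modE : Module H E]
  incl : B →ₗ[H] E
  proj : E →ₗ[H] A
  inj : Function.Injective incl
  surj : Function.Surjective proj
  exact : Function.Exact incl proj

attribute [instance] ModuleExtension.addE ModuleExtension.modE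

/-- An extension splits if the projection admits a module section. -/
def ModuleExtension.Splits {H A B : Type} [Ring H] [AddCommGroup A] [Module H A]
    [AddCommGroup B] [Module H B] (X : ModuleExtension H A B) : Prop :=
  ∃ s : A →ₗ[H] X.E, X.proj ∘ₗ s = LinearMap.id

/-- `Ext¹_H(A, B) ≠ 0`: there is a non-split extension `0 → B → E → A → 0`. -/
def HasNonSplitExt (H A B : Type) [Ring H] [AddCommGroup A] [Module H A]
    [AddCommGroup B] [Module H B] : Prop :=
  ∃ X : ModuleExtension H A B, ¬ X.Splits

/-- `M` has a finite filtration by submodules whose successive subquotients are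
each isomorphic to some member of the family `fam`. -/
def HasFiltrationAmong (R M : Type) [Ring R] [AddCommGroup M] [Module R M]
    {Λ : Type} (fam : Λ → Type) [∀ l, AddCommGroup (fam l)] [∀ l, Module R (fam l)] :
    Prop :=
  ∃ (t : ℕ) (F : Fin (t + 1) → Submodule R M),
    Monotone F ∧ F 0 = ⊥ ∧ F (Fin.last t) = ⊤ ∧
    ∀ i : Fin t, ∃ l : Λ,
      Nonempty ((↥(F i.succ) ⧸
        Submodule.comap (F i.succ).subtype (F i.castSucc)) ≃ₗ[R] fam l)


section Stmt10Aux

variable {S : Type} [Ring S] {e : S} (he : e * e = e)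

/-- The element `e` of `eS`. -/
def eE : ES (e := e) := ⟨e, show e • e = e from he⟩

/-- For `s ∈ eS`, the element `s * e` of the corner ring. -/
def cornerOf (s : ES (e := e)) : Corner he :=
  ⟨s.1 * e, by rw [← mul_assoc, ES.e_mul' s, mul_assoc, he]⟩

/-- The map `n ↦ (s ↦ (s e) • n)`, inverse to evaluation at `e`. -/
def counitAux (N : Type) [AddCommGroup N] [Module (Corner he) N] (n : N) :
    SchurG he N where
  toFun s := cornerOf he s • n
  map_add' s s' := by
    show cornerOf he (s + s') • n = cornerOf he s • n + cornerOf he s' • n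
    rw [show cornerOf he (s + s') = cornerOf he s + cornerOf he s' from
      Subtype.ext (add_mul _ _ _), add_smul]
  map_smul' c s := by
    show cornerOf he (c • s) • n = (RingHom.id (Corner he)) c • cornerOf he s • n
    rw [RingHom.id_apply, show cornerOf he (c • s) = c * cornerOf he s from
      Subtype.ext (mul_assoc _ _ _), mul_smul]

theorem counitAux_fixed (N : Type) [AddCommGroup N] [Module (Corner he) N] (n : N) :
    e • counitAux he N n = counitAux he N n := by
  apply LinearMap.ext; intro s
  show cornerOf he (s.mulRight e) • n = cornerOf he s • n
  congr 1
  exact Subtype.ext (by show (s.1 * e) * e = s.1 * e; rw [mul_assoc, he])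

/-- The counit `F(G(N)) ≅ N`, an isomorphism of `H`-modules. -/
noncomputable def counit (N : Type) [AddCommGroup N] [Module (Corner he) N] :
    SchurF (e := e) (SchurG he N) ≃ₗ[Corner he] N where
  toFun φ := φ.1 (eE he)
  map_add' φ ψ := rfl
  map_smul' c φ := by
    show φ.1 ((eE he).mulRight c.1) = c • φ.1 (eE he)
    rw [← φ.1.map_smul]
    congr 1
    exact Subtype.ext (by show e * c.1 = c.1 * e; rw [Corner.e_mul, Corner.mul_e])
  invFun n := ⟨counitAux he N n, counitAux_fixed he N n⟩
  left_inv φ := by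
    apply Subtype.ext
    apply LinearMap.ext; intro s
    have key : cornerOf he s • eE he = s.mulRight e := Subtype.ext (by
      show s.1 * e * e = s.1 * e
      rw [mul_assoc, he])
    have hφ : e • φ.1 = φ.1 := φ.2
    calc cornerOf he s • φ.1 (eE he) = φ.1 (cornerOf he s • eE he) := (φ.1.map_smul _ _).symm
      _ = φ.1 (s.mulRight e) := by rw [key]
      _ = (e • φ.1) s := rfl
      _ = φ.1 s := by rw [hφ]
  right_inv n := by
    show cornerOf he (eE he) • n = n
    have h1 : cornerOf he (eE he) = 1 := Subtype.ext (show e * e = e from he)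
    rw [h1, one_smul]

/-- Generic builder of subquotient isomorphisms. -/
noncomputable def quotIso {R M M₂ : Type} [Ring R] [AddCommGroup M] [Module R M]
    [AddCommGroup M₂] [Module R M₂] (Q P : Submodule R M) (f : ↥Q →ₗ[R] M₂)
    (hker : LinearMap.ker f = P.comap Q.subtype) (hsurj : Function.Surjective f) :
    (↥Q ⧸ P.comap Q.subtype) ≃ₗ[R] M₂ :=
  (Submodule.quotEquivOfEq _ _ hker.symm).trans (f.quotKerEquivOfSurjective hsurj)

theorem hasFiltrationAmong_congr {R M M' : Type} [Ring R] [AddCommGroup M] [Module R M]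
    [AddCommGroup M'] [Module R M'] {Λ : Type} {fam : Λ → Type}
    [∀ l, AddCommGroup (fam l)] [∀ l, Module R (fam l)]
    (g : M ≃ₗ[R] M') (h : HasFiltrationAmong R M fam) : HasFiltrationAmong R M' fam := by
  obtain ⟨t, F, hmono, h0, hlast, hsub⟩ := h
  refine ⟨t, fun i => (F i).map (g : M →ₗ[R] M'),
    fun i j hij => Submodule.map_mono (hmono hij), ?_, ?_, ?_⟩
  · show Submodule.map (g : M →ₗ[R] M') (F 0) = ⊥
    rw [h0, Submodule.map_bot]
  · show Submodule.map (g : M →ₗ[R] M') (F (Fin.last t)) = ⊤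
    rw [hlast, Submodule.map_top]
    exact LinearMap.range_eq_top.mpr g.surjective
  · intro i
    obtain ⟨l, ⟨u⟩⟩ := hsub i
    set Q := F i.succ with hQdef
    set P := F i.castSucc with hPdef
    have hQ : ∀ x ∈ Q.map (g : M →ₗ[R] M'), g.symm x ∈ Q := by
      rintro x ⟨y, hy, rfl⟩
      simpa using hy
    let f : ↥(Q.map (g : M →ₗ[R] M')) →ₗ[R] (↥Q ⧸ P.comap Q.subtype) :=
      (P.comap Q.subtype).mkQ ∘ₗ ((g.symm : M' →ₗ[R] M).restrict hQ)
    have hker : LinearMap.ker f = (P.map (g : M →ₗ[R] M')).comap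
        (Q.map (g : M →ₗ[R] M')).subtype := by
      ext x
      show f x = 0 ↔ (x : M') ∈ P.map (g : M →ₗ[R] M')
      rw [show f x = (P.comap Q.subtype).mkQ ⟨g.symm x.1, hQ x.1 x.2⟩ from rfl,
        Submodule.mkQ_apply, Submodule.Quotient.mk_eq_zero]
      constructor
      · intro hx
        exact ⟨g.symm x.1, hx, g.apply_symm_apply x.1⟩
      · rintro ⟨y, hy, hyx⟩
        have : g.symm x.1 = y := by rw [← hyx]; simp
        rwa [show ((⟨g.symm x.1, hQ x.1 x.2⟩ : ↥Q) ∈ P.comap Q.subtype) ↔ g.symm x.1 ∈ P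
          from Iff.rfl, this]
    have hsurj : Function.Surjective f := by
      intro y
      obtain ⟨q, rfl⟩ := Submodule.Quotient.mk_surjective _ y
      refine ⟨⟨g q.1, Submodule.mem_map_of_mem q.2⟩, ?_⟩
      show (P.comap Q.subtype).mkQ ⟨g.symm (g q.1), _⟩ = Submodule.Quotient.mk q
      rw [Submodule.mkQ_apply]
      congr 1
      exact Subtype.ext (g.symm_apply_apply q.1)
    exact ⟨l, ⟨(quotIso _ _ f hker hsurj).trans u⟩⟩

/-- `Ext¹(eS, B) = 0`, expressed via splitting of all extensions. -/
def ExtV (B : Type) [AddCommGroup B] [Module (Corner he) B] : Prop :=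
  ∀ X : ModuleExtension (Corner he) (ES (e := e)) B, X.Splits

theorem extV_congr {B B' : Type} [AddCommGroup B] [Module (Corner he) B]
    [AddCommGroup B'] [Module (Corner he) B'] (g : B ≃ₗ[Corner he] B')
    (h : ExtV he B) : ExtV he B' := by
  intro X
  obtain ⟨s, hs⟩ := h
    { E := X.E
      incl := X.incl ∘ₗ (g : B →ₗ[Corner he] B')
      proj := X.proj
      inj := X.inj.comp g.injective
      surj := X.surj
      exact := by
        intro y
        rw [X.exact y]
        constructor
        · rintro ⟨b', rfl⟩
          exact ⟨g.symm b', by simp⟩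
        · rintro ⟨b, rfl⟩
          exact ⟨g b, rfl⟩ }
  exact ⟨s, hs⟩

theorem extV_subsingleton (B : Type) [AddCommGroup B] [Module (Corner he) B]
    [Subsingleton B] : ExtV he B := by
  intro X
  have hinj : Function.Injective X.proj := by
    intro x y hxy
    have h1 : X.proj (x - y) = 0 := by rw [map_sub, hxy, sub_self]
    obtain ⟨b, hb⟩ := (X.exact _).mp h1
    rw [Subsingleton.elim b 0, map_zero] at hb
    exact (sub_eq_zero.mp hb.symm).symm ▸ rfl
  let eqv := LinearEquiv.ofBijective X.proj ⟨hinj, X.surj⟩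
  exact ⟨(eqv.symm : ES (e := e) →ₗ[Corner he] X.E),
    LinearMap.ext fun a => eqv.apply_symm_apply a⟩


/-- Lifting lemma: if `Ext¹(eS, P) = 0` then maps `eS → Q/P` lift to `Q`. -/
theorem liftOfExtV {N : Type} [AddCommGroup N] [Module (Corner he) N]
    (P Q : Submodule (Corner he) N) (hPQ : P ≤ Q) (hP : ExtV he ↥P)
    (ψ : ES (e := e) →ₗ[Corner he] (↥Q ⧸ P.comap Q.subtype)) :
    ∃ φ : ES (e := e) →ₗ[Corner he] ↥Q, (P.comap Q.subtype).mkQ ∘ₗ φ = ψ := by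
  -- pullback extension
  let d : (ES (e := e) × ↥Q) →ₗ[Corner he] (↥Q ⧸ P.comap Q.subtype) :=
    ψ ∘ₗ LinearMap.fst _ _ _ - (P.comap Q.subtype).mkQ ∘ₗ LinearMap.snd _ _ _
  have hmem : ∀ p : ↥P, ((0 : ES (e := e)), (⟨p.1, hPQ p.2⟩ : ↥Q)) ∈ LinearMap.ker d := by
    intro p
    show ψ 0 - (P.comap Q.subtype).mkQ ⟨p.1, hPQ p.2⟩ = 0
    rw [map_zero, zero_sub, neg_eq_zero, Submodule.mkQ_apply, Submodule.Quotient.mk_eq_zero]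
    exact p.2
  let incl : ↥P →ₗ[Corner he] ↥(LinearMap.ker d) :=
    LinearMap.codRestrict _ (LinearMap.prod 0 (Q.subtype.codRestrict Q (fun x => x.2) ∘ₗ
      Submodule.inclusion hPQ)) (fun p => hmem p)
  let proj : ↥(LinearMap.ker d) →ₗ[Corner he] ES (e := e) :=
    LinearMap.fst _ _ _ ∘ₗ (LinearMap.ker d).subtype
  have hexact : Function.Exact incl proj := by
    intro y
    constructor
    · intro hy
      have hy2 : ψ y.1.1 - (P.comap Q.subtype).mkQ y.1.2 = 0 := y.2
      have hy1 : y.1.1 = 0 := hy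
      rw [hy1, map_zero, zero_sub, neg_eq_zero, Submodule.mkQ_apply,
        Submodule.Quotient.mk_eq_zero] at hy2
      refine ⟨⟨y.1.2.1, hy2⟩, ?_⟩
      apply Subtype.ext
      apply Prod.ext
      · exact hy1.symm
      · exact Subtype.ext rfl
    · rintro ⟨p, rfl⟩
      rfl
  obtain ⟨σ, hσ⟩ := hP
    { E := ↥(LinearMap.ker d)
      incl := incl
      proj := proj
      inj := by
        intro p p' h
        exact Subtype.ext (congrArg (fun x => (x.1.2.1 : N)) h)
      surj := by
        intro s
        obtain ⟨q, hq⟩ := Submodule.Quotient.mk_surjective (P.comap Q.subtype) (ψ s)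
        refine ⟨⟨(s, q), ?_⟩, rfl⟩
        show ψ s - (P.comap Q.subtype).mkQ q = 0
        rw [Submodule.mkQ_apply, hq, sub_self]
      exact := hexact }
  refine ⟨LinearMap.snd _ _ _ ∘ₗ (LinearMap.ker d).subtype ∘ₗ σ, ?_⟩
  apply LinearMap.ext; intro s
  have hmem2 : ψ (σ s).1.1 - (P.comap Q.subtype).mkQ (σ s).1.2 = 0 := (σ s).2
  have hs : (σ s).1.1 = s := LinearMap.congr_fun hσ s
  rw [hs] at hmem2
  show (P.comap Q.subtype).mkQ (σ s).1.2 = ψ s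
  rw [← sub_eq_zero, ← neg_sub, neg_eq_zero, hmem2]

/-- Dévissage: `Ext¹(eS, A) = 0` and `Ext¹(eS, B/A) = 0` imply `Ext¹(eS, B) = 0`. -/
theorem extV_of_subquot {B : Type} [AddCommGroup B] [Module (Corner he) B]
    (A : Submodule (Corner he) B) (hA : ExtV he ↥A) (hC : ExtV he (B ⧸ A)) :
    ExtV he B := by
  intro X
  have hker : ∀ x : X.E, X.proj x = 0 ↔ ∃ b, X.incl b = x := fun x => X.exact x
  set A' : Submodule (Corner he) X.E := A.map X.incl with hA'
  let incl1 : (B ⧸ A) →ₗ[Corner he] (X.E ⧸ A') :=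
    Submodule.mapQ A A' X.incl (fun b hb => Submodule.mem_map_of_mem hb)
  let proj1 : (X.E ⧸ A') →ₗ[Corner he] ES (e := e) :=
    A'.liftQ X.proj (by
      rintro x ⟨a, ha, rfl⟩
      exact LinearMap.mem_ker.mpr ((hker _).mpr ⟨a, rfl⟩))
  have proj1_mk : ∀ x : X.E, proj1 (Submodule.Quotient.mk x) = X.proj x :=
    fun x => rfl
  have incl1_mk : ∀ b : B, incl1 (Submodule.Quotient.mk b) =
      Submodule.Quotient.mk (X.incl b) := fun b => Submodule.mapQ_apply _ _ _ _
  obtain ⟨s1, hs1⟩ := hC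
    { E := X.E ⧸ A'
      incl := incl1
      proj := proj1
      inj := by
        intro c c' h
        obtain ⟨b, rfl⟩ := Submodule.Quotient.mk_surjective A c
        obtain ⟨b', rfl⟩ := Submodule.Quotient.mk_surjective A c'
        rw [incl1_mk, incl1_mk, Submodule.Quotient.eq] at h
        obtain ⟨a, ha, haeq⟩ := h
        rw [← map_sub] at haeq
        have : a = b - b' := X.inj haeq
        rw [Submodule.Quotient.eq]
        exact this ▸ ha
      surj := by
        intro s
        obtain ⟨x, hx⟩ := X.surj s
        exact ⟨Submodule.Quotient.mk x, by rw [proj1_mk, hx]⟩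
      exact := by
        intro y
        obtain ⟨x, rfl⟩ := Submodule.Quotient.mk_surjective A' y
        rw [proj1_mk]
        constructor
        · intro hx
          obtain ⟨b, hb⟩ := (hker x).mp hx
          exact ⟨Submodule.Quotient.mk b, by rw [incl1_mk, hb]⟩
        · rintro ⟨c, hc⟩
          obtain ⟨b, rfl⟩ := Submodule.Quotient.mk_surjective A c
          rw [incl1_mk] at hc
          rw [Submodule.Quotient.eq] at hc
          obtain ⟨a, ha, haeq⟩ := hc
          have : x = X.incl b - X.incl a := by
            rw [haeq]; abel
          rw [this, map_sub, (hker (X.incl b)).mpr ⟨b, rfl⟩,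
            (hker (X.incl a)).mpr ⟨a, rfl⟩, sub_self] }
  -- pull back along s1
  set E' : Submodule (Corner he) X.E := Submodule.comap A'.mkQ (LinearMap.range s1) with hE'
  have hinclE : ∀ a : ↥A, X.incl a.1 ∈ E' := by
    intro a
    show A'.mkQ (X.incl a.1) ∈ LinearMap.range s1
    have : A'.mkQ (X.incl a.1) = 0 := by
      rw [Submodule.mkQ_apply, Submodule.Quotient.mk_eq_zero]
      exact Submodule.mem_map_of_mem a.2
    rw [this]
    exact zero_mem _
  let incl2 : ↥A →ₗ[Corner he] ↥E' :=
    LinearMap.codRestrict _ (X.incl ∘ₗ A.subtype) hinclE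
  let proj2 : ↥E' →ₗ[Corner he] ES (e := e) := X.proj ∘ₗ E'.subtype
  obtain ⟨s2, hs2⟩ := hA
    { E := ↥E'
      incl := incl2
      proj := proj2
      inj := by
        intro a a' h
        exact Subtype.ext (X.inj (congrArg Subtype.val h))
      surj := by
        intro s
        obtain ⟨x, hx⟩ := Submodule.Quotient.mk_surjective A' (s1 s)
        have hxE : x ∈ E' := by
          show A'.mkQ x ∈ LinearMap.range s1
          exact ⟨s, by rw [Submodule.mkQ_apply, hx]⟩
        refine ⟨⟨x, hxE⟩, ?_⟩
        show X.proj x = s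
        have h1 : X.proj x = proj1 (Submodule.Quotient.mk x) := (proj1_mk x).symm
        rw [h1, hx]
        exact LinearMap.congr_fun hs1 s
      exact := by
        intro y
        constructor
        · intro hy
          have hy1 : X.proj y.1 = 0 := hy
          obtain ⟨u, hu⟩ := y.2
          have hu0 : u = 0 := by
            have : u = proj1 (s1 u) := (LinearMap.congr_fun hs1 u).symm
            rw [this, hu]
            show proj1 (A'.mkQ y.1) = 0
            rw [Submodule.mkQ_apply, proj1_mk, hy1]
          rw [hu0, map_zero] at hu
          have hy2 : y.1 ∈ A' := by
            rw [← Submodule.Quotient.mk_eq_zero, ← Submodule.mkQ_apply, ← hu]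
          obtain ⟨a, ha, haeq⟩ := hy2
          exact ⟨⟨a, ha⟩, Subtype.ext haeq⟩
        · rintro ⟨a, rfl⟩
          show X.proj (X.incl a.1) = 0
          exact (hker _).mpr ⟨a.1, rfl⟩ }
  refine ⟨E'.subtype ∘ₗ s2, ?_⟩
  apply LinearMap.ext; intro u
  exact LinearMap.congr_fun hs2 u


/-- `G` applied to a submodule: maps `eS → N` with image in `P`. -/
def GSub {N : Type} [AddCommGroup N] [Module (Corner he) N] (P : Submodule (Corner he) N) :
    Submodule S (SchurG he N) where
  carrier := {φ | ∀ s, φ s ∈ P}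
  add_mem' := by
    intro φ ψ hφ hψ s
    rw [LinearMap.add_apply]
    exact P.add_mem (hφ s) (hψ s)
  zero_mem' := by
    intro s
    rw [LinearMap.zero_apply]
    exact P.zero_mem
  smul_mem' := by
    intro a φ hφ s
    exact hφ (s.mulRight a)

theorem mem_GSub {N : Type} [AddCommGroup N] [Module (Corner he) N]
    {P : Submodule (Corner he) N} {φ : SchurG he N} : φ ∈ GSub he P ↔ ∀ s, φ s ∈ P := Iff.rfl

theorem GSub_mono {N : Type} [AddCommGroup N] [Module (Corner he) N]
    {P P' : Submodule (Corner he) N} (h : P ≤ P') : GSub he P ≤ GSub he P' :=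
  fun _ hφ s => h (hφ s)

theorem GSub_bot {N : Type} [AddCommGroup N] [Module (Corner he) N] :
    GSub he (⊥ : Submodule (Corner he) N) = ⊥ := by
  ext φ
  rw [mem_GSub, Submodule.mem_bot]
  constructor
  · intro h
    exact LinearMap.ext fun s => by simpa using h s
  · rintro rfl s
    simp

theorem GSub_top {N : Type} [AddCommGroup N] [Module (Corner he) N] :
    GSub he (⊤ : Submodule (Corner he) N) = ⊤ := by
  ext φ
  simp [mem_GSub]

/-- Restriction of `φ : eS → N` landing in `P` to a map `eS → P`. -/
def GRes {N : Type} [AddCommGroup N] [Module (Corner he) N] (P : Submodule (Corner he) N)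
    (φ : SchurG he N) (hφ : ∀ s, φ s ∈ P) : SchurG he ↥P where
  toFun s := ⟨φ s, hφ s⟩
  map_add' s s' := Subtype.ext (map_add φ s s')
  map_smul' c s := Subtype.ext (φ.map_smul c s)

def resMap {N : Type} [AddCommGroup N] [Module (Corner he) N]
    (Q : Submodule (Corner he) N) : ↥(GSub he Q) →ₗ[S] SchurG he ↥Q where
  toFun φ := GRes he Q φ.1 φ.2
  map_add' φ ψ := LinearMap.ext fun s => Subtype.ext rfl
  map_smul' a φ := LinearMap.ext fun s => Subtype.ext rfl

end Stmt10Aux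

section Stmt10Fwd

variable {S : Type} [Ring S] {e : S} (he : e * e = e)
variable {N : Type} [AddCommGroup N] [Module (Corner he) N]
variable {L : Type} [AddCommGroup L] [Module (Corner he) L]
variable (Q P : Submodule (Corner he) N)
variable (g : (↥Q ⧸ P.comap Q.subtype) ≃ₗ[Corner he] L)

noncomputable def fwdMap : ↥(GSub he Q) →ₗ[S] SchurG he L :=
  SchurG.map he ((g : (↥Q ⧸ P.comap Q.subtype) →ₗ[Corner he] L) ∘ₗ
    (P.comap Q.subtype).mkQ) ∘ₗ resMap he Q

theorem fwdMap_apply (φ : ↥(GSub he Q)) (s : ES (e := e)) :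
    fwdMap he Q P g φ s = g ((P.comap Q.subtype).mkQ ⟨φ.1 s, φ.2 s⟩) := rfl

theorem fwdMap_ker : LinearMap.ker (fwdMap he Q P g) =
    (GSub he P).comap (GSub he Q).subtype := by
  ext φ
  rw [LinearMap.mem_ker, Submodule.mem_comap, mem_GSub]
  constructor
  · intro h s
    have h1 : fwdMap he Q P g φ s = 0 := by rw [h]; rfl
    rw [fwdMap_apply] at h1
    have h2 : (P.comap Q.subtype).mkQ ⟨φ.1 s, φ.2 s⟩ = 0 := by
      apply g.injective
      rw [h1, map_zero]
    rw [Submodule.mkQ_apply, Submodule.Quotient.mk_eq_zero] at h2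
    exact h2
  · intro h
    apply LinearMap.ext; intro s
    rw [fwdMap_apply]
    have h2 : (P.comap Q.subtype).mkQ ⟨φ.1 s, φ.2 s⟩ = 0 := by
      rw [Submodule.mkQ_apply, Submodule.Quotient.mk_eq_zero]
      exact h s
    rw [h2, map_zero]
    rfl

theorem fwdMap_surj (hPQ : P ≤ Q) (hP : ExtV he ↥P) :
    Function.Surjective (fwdMap he Q P g) := by
  intro ψ
  obtain ⟨φ', hφ'⟩ := liftOfExtV he P Q hPQ hP
    ((g.symm : L →ₗ[Corner he] (↥Q ⧸ P.comap Q.subtype)) ∘ₗ ψ)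
  refine ⟨⟨Q.subtype ∘ₗ φ', fun s => (φ' s).2⟩, ?_⟩
  apply LinearMap.ext; intro s
  rw [fwdMap_apply]
  have h1 : (⟨(Q.subtype ∘ₗ φ') s, (φ' s).2⟩ : ↥Q) = φ' s := Subtype.ext rfl
  rw [h1, show (P.comap Q.subtype).mkQ (φ' s) = g.symm (ψ s) from LinearMap.congr_fun hφ' s,
    g.apply_symm_apply]

end Stmt10Fwd


section Stmt10Conv

variable {S : Type} [Ring S] {e : S} (he : e * e = e)

/-- `F` applied to a submodule: elements of `eM` lying in `Q`. -/
def FSub {M : Type} [AddCommGroup M] [Module S M] (Q : Submodule S M) :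
    Submodule (Corner he) (SchurF (e := e) M) where
  carrier := {m | m.1 ∈ Q}
  add_mem' := fun {a b} ha hb => Q.add_mem ha hb
  zero_mem' := Q.zero_mem
  smul_mem' := fun c m hm => Q.smul_mem c.1 hm

theorem mem_FSub {M : Type} [AddCommGroup M] [Module S M] {Q : Submodule S M}
    {m : SchurF (e := e) M} : m ∈ FSub he Q ↔ m.1 ∈ Q := Iff.rfl

theorem FSub_mono {M : Type} [AddCommGroup M] [Module S M] {Q Q' : Submodule S M}
    (h : Q ≤ Q') : FSub he Q ≤ FSub he Q' := fun _ hm => h hm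

theorem FSub_bot {M : Type} [AddCommGroup M] [Module S M] :
    FSub he (⊥ : Submodule S M) = ⊥ := by
  ext m
  rw [mem_FSub, Submodule.mem_bot, Submodule.mem_bot]
  constructor
  · intro h
    exact Subtype.ext h
  · rintro rfl
    rfl

theorem FSub_top {M : Type} [AddCommGroup M] [Module S M] :
    FSub he (⊤ : Submodule S M) = ⊤ := by
  ext m
  simp [mem_FSub]

variable {M : Type} [AddCommGroup M] [Module S M] (Q P : Submodule S M)

/-- The map `F(Q) → F(Q/P)`. -/
noncomputable def convMap :
    ↥(FSub he Q) →ₗ[Corner he] SchurF (e := e) (↥Q ⧸ P.comap Q.subtype) where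
  toFun m := ⟨(P.comap Q.subtype).mkQ ⟨m.1.1, m.2⟩, by
    have h1 : e • (⟨m.1.1, m.2⟩ : ↥Q) = ⟨m.1.1, m.2⟩ := Subtype.ext m.1.2
    show e • (P.comap Q.subtype).mkQ ⟨m.1.1, m.2⟩ = (P.comap Q.subtype).mkQ ⟨m.1.1, m.2⟩
    rw [← map_smul, h1]⟩
  map_add' m m' := Subtype.ext (by
    show (P.comap Q.subtype).mkQ ⟨(m + m').1.1, _⟩ =
      (P.comap Q.subtype).mkQ ⟨m.1.1, m.2⟩ + (P.comap Q.subtype).mkQ ⟨m'.1.1, m'.2⟩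
    rw [← map_add]
    rfl)
  map_smul' c m := Subtype.ext (by
    show (P.comap Q.subtype).mkQ ⟨(c • m).1.1, _⟩ =
      c.1 • (P.comap Q.subtype).mkQ ⟨m.1.1, m.2⟩
    rw [← (P.comap Q.subtype).mkQ.map_smul]
    rfl)

theorem convMap_ker : LinearMap.ker (convMap he Q P) =
    (FSub he P).comap (FSub he Q).subtype := by
  ext m
  rw [LinearMap.mem_ker, Submodule.mem_comap]
  refine Subtype.ext_iff.trans ?_
  show (P.comap Q.subtype).mkQ ⟨m.1.1, m.2⟩ = 0 ↔ m.1 ∈ FSub he P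
  rw [Submodule.mkQ_apply, Submodule.Quotient.mk_eq_zero]
  exact Iff.rfl

theorem convMap_surj : Function.Surjective (convMap he Q P) := by
  intro y
  obtain ⟨q, hq⟩ := Submodule.Quotient.mk_surjective (P.comap Q.subtype) y.1
  have hy : e • y.1 = y.1 := y.2
  have hfix : e • (e • q).1 = (e • q).1 := by
    show e • e • q.1 = e • q.1
    rw [smul_smul, he]
  refine ⟨⟨⟨(e • q).1, hfix⟩, (e • q).2⟩, Subtype.ext ?_⟩
  show (P.comap Q.subtype).mkQ ⟨(e • q).1, (e • q).2⟩ = y.1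
  have h1 : (⟨(e • q).1, (e • q).2⟩ : ↥Q) = e • q := rfl
  rw [h1, map_smul, Submodule.mkQ_apply, hq, hy]

/-- `F` of an isomorphism of `S`-modules. -/
def mapEquivF {M' : Type} [AddCommGroup M'] [Module S M'] (g : M ≃ₗ[S] M') :
    SchurF (e := e) M ≃ₗ[Corner he] SchurF (e := e) M' :=
  LinearEquiv.ofLinear (SchurF.map he (g : M →ₗ[S] M')) (SchurF.map he (g.symm : M' →ₗ[S] M))
    (LinearMap.ext fun m => Subtype.ext (g.apply_symm_apply m.1))
    (LinearMap.ext fun m => Subtype.ext (g.symm_apply_apply m.1))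

end Stmt10Conv




/-- let `S` be a finite-dimensional `K`-algebra with idempotent
`e`, `H = eSe`, `F(M) = eM`, `G(N) = Hom_H(eS, N)`, and let `{S_λ}` be
`H`-modules with `R¹G(S_λ) = Ext¹_H(eS, S_λ) = 0` for all `λ` (expressed by the
splitting of all extensions of `eS` by `S_λ`).  Setting `Δ(λ) := G(S_λ)`, an
`H`-module `N` has a filtration with subquotients among `{S_λ}` if and only if
the `S`-module `G(N)` has a filtration with subquotients among `{Δ(λ)}`. -/
theorem stmt10 (K S : Type) [Field K] [Ring S] [Algebra K S] [FiniteDimensional K S]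
    (e : S) (he : e * e = e)
    (Λ : Type) [Finite Λ] (Sl : Λ → Type)
    [∀ l, AddCommGroup (Sl l)] [∀ l, Module (Corner he) (Sl l)]
    (hR1G : ∀ (l : Λ) (X : ModuleExtension (Corner he) (ES (e := e)) (Sl l)), X.Splits)
    (N : Type) [AddCommGroup N] [Module (Corner he) N] :
    HasFiltrationAmong (Corner he) N Sl ↔
      HasFiltrationAmong S (SchurG he N) (fun l => SchurG he (Sl l)) := by
  constructor
  · -- forward direction
    rintro ⟨t, F, hmono, h0, hlast, hsub⟩
    have iso : ∀ i : Fin t, ∃ l : Λ,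
        Nonempty ((↥(F i.succ) ⧸ Submodule.comap (F i.succ).subtype (F i.castSucc))
          ≃ₗ[Corner he] Sl l) := hsub
    choose lam hiso using iso
    have isoF : ∀ i : Fin t, (↥(F i.succ) ⧸ Submodule.comap (F i.succ).subtype (F i.castSucc))
        ≃ₗ[Corner he] Sl (lam i) := fun i => (hiso i).some
    have hExtF : ∀ i : Fin (t + 1), ExtV he ↥(F i) := by
      intro i
      induction i using Fin.induction with
      | zero =>
        rw [h0]
        exact extV_subsingleton he _
      | succ i ih =>
        have hle : F i.castSucc ≤ F i.succ := hmono (le_of_lt (Fin.castSucc_lt_succ (i := i)))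
        refine extV_of_subquot he (Submodule.comap (F i.succ).subtype (F i.castSucc)) ?_ ?_
        · exact extV_congr he (Submodule.comapSubtypeEquivOfLe hle).symm ih
        · exact extV_congr he (isoF i).symm (fun X => hR1G (lam i) X)
    refine ⟨t, fun i => GSub he (F i), fun i j hij => GSub_mono he (hmono hij), ?_, ?_, ?_⟩
    · show GSub he (F 0) = ⊥
      rw [h0, GSub_bot]
    · show GSub he (F (Fin.last t)) = ⊤
      rw [hlast, GSub_top]
    · intro i
      have hle : F i.castSucc ≤ F i.succ := hmono (le_of_lt (Fin.castSucc_lt_succ (i := i)))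
      exact ⟨lam i, ⟨quotIso (GSub he (F i.succ)) (GSub he (F i.castSucc))
        (fwdMap he (F i.succ) (F i.castSucc) (isoF i))
        (fwdMap_ker he (F i.succ) (F i.castSucc) (isoF i))
        (fwdMap_surj he (F i.succ) (F i.castSucc) (isoF i) hle (hExtF i.castSucc))⟩⟩
  · -- converse direction
    rintro ⟨t, F, hmono, h0, hlast, hsub⟩
    apply hasFiltrationAmong_congr (counit he N)
    refine ⟨t, fun i => FSub he (F i), fun i j hij => FSub_mono he (hmono hij), ?_, ?_, ?_⟩
    · show FSub he (F 0) = ⊥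
      rw [h0, FSub_bot]
    · show FSub he (F (Fin.last t)) = ⊤
      rw [hlast, FSub_top]
    · intro i
      obtain ⟨l, ⟨u⟩⟩ := hsub i
      exact ⟨l, ⟨(quotIso (FSub he (F i.succ)) (FSub he (F i.castSucc))
        (convMap he (F i.succ) (F i.castSucc))
        (convMap_ker he (F i.succ) (F i.castSucc))
        (convMap_surj he (F i.succ) (F i.castSucc))).trans
        ((mapEquivF he u).trans (counit he (Sl l)))⟩⟩
end

section
/- Let B be an algebra with elements S, R ∈ B⊗B and maps σ, ρ ∈ End_K(B⊗B) satisfying the quantum wreath product conditions, and consider B⊗B⊗B with the induced operators σ_i, ρ_i, S_i (i = 1, 2, |i−j| = 1). Assuming the conditions σ_j σ_i(S_j) = S_i, σ_i(S)S + ρ(S) + σ(R) = S² + R (P3), and the PBW conditions (P4)–(P8), the following identities hold: (a) σ_i(S_j)S_i + ρ_i(S_j) = S_i S_j; (b) σ_i(S_j S_i) = S_j σ_i(S_j) + σ_i ρ_j(S_i); (c) ρ_i(S_j S_i) = S_j ρ_i(S_j) + ρ_i ρ_j(S_i). -/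
open TensorProduct

noncomputable section

variable (K B : Type) [CommRing K] [Ring B] [Algebra K B]

/-- `φ₁ ∈ End_K(B^{⊗3})`: apply `φ ∈ End_K(B ⊗ B)` in positions (1,2). -/
def act1 (φ : (B ⊗[K] B) →ₗ[K] (B ⊗[K] B)) :
    (B ⊗[K] (B ⊗[K] B)) →ₗ[K] (B ⊗[K] (B ⊗[K] B)) :=
  (TensorProduct.assoc K B B B).toLinearMap ∘ₗ (LinearMap.rTensor B φ) ∘ₗ
    (TensorProduct.assoc K B B B).symm.toLinearMap

/-- `φ₂ ∈ End_K(B^{⊗3})`: apply `φ ∈ End_K(B ⊗ B)` in positions (2,3). -/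
def act2 (φ : (B ⊗[K] B) →ₗ[K] (B ⊗[K] B)) :
    (B ⊗[K] (B ⊗[K] B)) →ₗ[K] (B ⊗[K] (B ⊗[K] B)) :=
  LinearMap.lTensor B φ

/-- `Z₁ ∈ B^{⊗3}`: the element `Z ⊗ 1` for `Z ∈ B ⊗ B`. -/
def el1 (Z : B ⊗[K] B) : B ⊗[K] (B ⊗[K] B) :=
  (TensorProduct.assoc K B B B) (Z ⊗ₜ (1 : B))

/-- `Z₂ ∈ B^{⊗3}`: the element `1 ⊗ Z` for `Z ∈ B ⊗ B`. -/
def el2 (Z : B ⊗[K] B) : B ⊗[K] (B ⊗[K] B) :=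
  (1 : B) ⊗ₜ Z

namespace Stmt12Aux

variable {K B : Type} [CommRing K] [Ring B] [Algebra K B]

lemma assoc_mul (x y : (B ⊗[K] B) ⊗[K] B) :
    (TensorProduct.assoc K B B B) (x * y)
      = (TensorProduct.assoc K B B B) x * (TensorProduct.assoc K B B B) y := by
  have h : ∀ z : (B ⊗[K] B) ⊗[K] B,
      (TensorProduct.assoc K B B B) z = (Algebra.TensorProduct.assoc K K K B B B) z :=
    fun _ => rfl
  rw [h, h, h, map_mul]

lemma assoc_symm_mul (x y : B ⊗[K] (B ⊗[K] B)) :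
    (TensorProduct.assoc K B B B).symm (x * y)
      = (TensorProduct.assoc K B B B).symm x * (TensorProduct.assoc K B B B).symm y := by
  apply (TensorProduct.assoc K B B B).injective
  simp [assoc_mul]

variable (σ ρ : (B ⊗[K] B) →ₗ[K] (B ⊗[K] B))

lemma rT_mul (hσ : ∀ a b : B ⊗[K] B, σ (a * b) = σ a * σ b)
    (x y : (B ⊗[K] B) ⊗[K] B) :
    LinearMap.rTensor B σ (x * y)
      = LinearMap.rTensor B σ x * LinearMap.rTensor B σ y := by
  induction x using TensorProduct.induction_on with
  | zero => simp
  | add u v hu hv => simp [add_mul, hu, hv]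
  | tmul a c =>
    induction y using TensorProduct.induction_on with
    | zero => simp
    | add u v hu hv => simp [mul_add, hu, hv]
    | tmul b d =>
      simp [Algebra.TensorProduct.tmul_mul_tmul, hσ]

lemma lT_mul (hσ : ∀ a b : B ⊗[K] B, σ (a * b) = σ a * σ b)
    (x y : B ⊗[K] (B ⊗[K] B)) :
    LinearMap.lTensor B σ (x * y)
      = LinearMap.lTensor B σ x * LinearMap.lTensor B σ y := by
  induction x using TensorProduct.induction_on with
  | zero => simp
  | add u v hu hv => simp [add_mul, hu, hv]
  | tmul a c =>
    induction y using TensorProduct.induction_on with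
    | zero => simp
    | add u v hu hv => simp [mul_add, hu, hv]
    | tmul b d =>
      simp [Algebra.TensorProduct.tmul_mul_tmul, hσ]

lemma rT_rho (hρ : ∀ a b : B ⊗[K] B, ρ (a * b) = σ a * ρ b + ρ a * b)
    (x y : (B ⊗[K] B) ⊗[K] B) :
    LinearMap.rTensor B ρ (x * y)
      = LinearMap.rTensor B σ x * LinearMap.rTensor B ρ y
        + LinearMap.rTensor B ρ x * y := by
  induction x using TensorProduct.induction_on with
  | zero => simp
  | add u v hu hv =>
    simp only [add_mul, map_add, hu, hv]; abel
  | tmul a c =>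
    induction y using TensorProduct.induction_on with
    | zero => simp
    | add u v hu hv =>
      simp only [mul_add, map_add, hu, hv]; abel
    | tmul b d =>
      simp [Algebra.TensorProduct.tmul_mul_tmul, hρ, add_tmul]

lemma lT_rho (hρ : ∀ a b : B ⊗[K] B, ρ (a * b) = σ a * ρ b + ρ a * b)
    (x y : B ⊗[K] (B ⊗[K] B)) :
    LinearMap.lTensor B ρ (x * y)
      = LinearMap.lTensor B σ x * LinearMap.lTensor B ρ y
        + LinearMap.lTensor B ρ x * y := by
  induction x using TensorProduct.induction_on with
  | zero => simp
  | add u v hu hv =>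
    simp only [add_mul, map_add, hu, hv]; abel
  | tmul a c =>
    induction y using TensorProduct.induction_on with
    | zero => simp
    | add u v hu hv =>
      simp only [mul_add, map_add, hu, hv]; abel
    | tmul b d =>
      simp [Algebra.TensorProduct.tmul_mul_tmul, hρ, tmul_add]

lemma rT_P4 (S : B ⊗[K] B)
    (hP4a : ∀ x : B ⊗[K] B, σ (σ x) * S + ρ (σ x) + σ (ρ x) = S * σ x)
    (y : (B ⊗[K] B) ⊗[K] B) :
    LinearMap.rTensor B σ (LinearMap.rTensor B σ y) * (S ⊗ₜ (1:B))
      + LinearMap.rTensor B ρ (LinearMap.rTensor B σ y)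
      + LinearMap.rTensor B σ (LinearMap.rTensor B ρ y)
      = (S ⊗ₜ (1:B)) * LinearMap.rTensor B σ y := by
  induction y using TensorProduct.induction_on with
  | zero => simp
  | add u v hu hv =>
    simp only [map_add, add_mul, mul_add] at hu hv ⊢
    rw [← hu, ← hv]; abel
  | tmul a c =>
    simp only [LinearMap.rTensor_tmul, Algebra.TensorProduct.tmul_mul_tmul,
      mul_one, one_mul, ← add_tmul, hP4a]

lemma lT_P4 (S : B ⊗[K] B)
    (hP4a : ∀ x : B ⊗[K] B, σ (σ x) * S + ρ (σ x) + σ (ρ x) = S * σ x)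
    (y : B ⊗[K] (B ⊗[K] B)) :
    LinearMap.lTensor B σ (LinearMap.lTensor B σ y) * ((1:B) ⊗ₜ S)
      + LinearMap.lTensor B ρ (LinearMap.lTensor B σ y)
      + LinearMap.lTensor B σ (LinearMap.lTensor B ρ y)
      = ((1:B) ⊗ₜ S) * LinearMap.lTensor B σ y := by
  induction y using TensorProduct.induction_on with
  | zero => simp
  | add u v hu hv =>
    simp only [map_add, add_mul, mul_add] at hu hv ⊢
    rw [← hu, ← hv]; abel
  | tmul c a =>
    simp only [LinearMap.lTensor_tmul, Algebra.TensorProduct.tmul_mul_tmul,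
      mul_one, one_mul, ← tmul_add, hP4a]

lemma act1_apply (φ : (B ⊗[K] B) →ₗ[K] (B ⊗[K] B)) (x : B ⊗[K] (B ⊗[K] B)) :
    act1 K B φ x
      = (TensorProduct.assoc K B B B)
          (LinearMap.rTensor B φ ((TensorProduct.assoc K B B B).symm x)) := rfl

lemma act1_mul (hσ : ∀ a b : B ⊗[K] B, σ (a * b) = σ a * σ b)
    (x y : B ⊗[K] (B ⊗[K] B)) :
    act1 K B σ (x * y) = act1 K B σ x * act1 K B σ y := by
  rw [act1_apply, act1_apply, act1_apply, assoc_symm_mul, rT_mul σ hσ, assoc_mul]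

lemma act2_mul (hσ : ∀ a b : B ⊗[K] B, σ (a * b) = σ a * σ b)
    (x y : B ⊗[K] (B ⊗[K] B)) :
    act2 K B σ (x * y) = act2 K B σ x * act2 K B σ y :=
  lT_mul σ hσ x y

lemma act1_rho (hρ : ∀ a b : B ⊗[K] B, ρ (a * b) = σ a * ρ b + ρ a * b)
    (x y : B ⊗[K] (B ⊗[K] B)) :
    act1 K B ρ (x * y) = act1 K B σ x * act1 K B ρ y + act1 K B ρ x * y := by
  rw [act1_apply, act1_apply, act1_apply, assoc_symm_mul, rT_rho σ ρ hρ, map_add,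
    assoc_mul, assoc_mul, LinearEquiv.apply_symm_apply]
  rfl

lemma act2_rho (hρ : ∀ a b : B ⊗[K] B, ρ (a * b) = σ a * ρ b + ρ a * b)
    (x y : B ⊗[K] (B ⊗[K] B)) :
    act2 K B ρ (x * y) = act2 K B σ x * act2 K B ρ y + act2 K B ρ x * y :=
  lT_rho σ ρ hρ x y

lemma act1_P4 (S : B ⊗[K] B)
    (hP4a : ∀ x : B ⊗[K] B, σ (σ x) * S + ρ (σ x) + σ (ρ x) = S * σ x)
    (x : B ⊗[K] (B ⊗[K] B)) :
    act1 K B σ (act1 K B σ x) * el1 K B S + act1 K B ρ (act1 K B σ x)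
      + act1 K B σ (act1 K B ρ x) = el1 K B S * act1 K B σ x := by
  have key := rT_P4 σ ρ S hP4a ((TensorProduct.assoc K B B B).symm x)
  simp only [act1_apply, el1, LinearEquiv.symm_apply_apply]
  rw [← assoc_mul, ← assoc_mul, ← map_add, ← map_add, key]

lemma act2_P4 (S : B ⊗[K] B)
    (hP4a : ∀ x : B ⊗[K] B, σ (σ x) * S + ρ (σ x) + σ (ρ x) = S * σ x)
    (x : B ⊗[K] (B ⊗[K] B)) :
    act2 K B σ (act2 K B σ x) * el2 K B S + act2 K B ρ (act2 K B σ x)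
      + act2 K B σ (act2 K B ρ x) = el2 K B S * act2 K B σ x :=
  lT_P4 σ ρ S hP4a x

section Key

variable {A : Type} [Ring A] [Module K A] {σ₁ σ₂ ρ₁ ρ₂ : A →ₗ[K] A} {S₁ S₂ : A}

lemma keyA
    (hP4 : ∀ x, σ₁ (σ₁ x) * S₁ + ρ₁ (σ₁ x) + σ₁ (ρ₁ x) = S₁ * σ₁ x)
    (hS₂ : S₂ = σ₁ (σ₂ S₁)) (hz : ρ₁ (σ₂ S₁) = 0) :
    σ₁ S₂ * S₁ + ρ₁ S₂ = S₁ * S₂ := by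
  have h := hP4 (σ₂ S₁)
  rw [hz, map_zero, add_zero] at h
  rw [hS₂]; exact h

lemma keyB
    (hmul : ∀ x y, σ₁ (x * y) = σ₁ x * σ₁ y)
    (ha : σ₂ S₁ * S₂ + ρ₂ S₁ = S₂ * S₁)
    (hS₂ : S₂ = σ₁ (σ₂ S₁)) :
    σ₁ (S₂ * S₁) = S₂ * σ₁ S₂ + σ₁ (ρ₂ S₁) := by
  rw [← ha, map_add, hmul, ← hS₂]

lemma keyC
    (hder : ∀ x y, ρ₁ (x * y) = σ₁ x * ρ₁ y + ρ₁ x * y)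
    (ha : σ₂ S₁ * S₂ + ρ₂ S₁ = S₂ * S₁)
    (hS₂ : S₂ = σ₁ (σ₂ S₁)) (hz : ρ₁ (σ₂ S₁) = 0) :
    ρ₁ (S₂ * S₁) = S₂ * ρ₁ S₂ + ρ₁ (ρ₂ S₁) := by
  rw [← ha, map_add, hder, hz, zero_mul, add_zero, ← hS₂]

end Key

end Stmt12Aux

/-- Lemma `sigSS`: under the quantum wreath product conditions
(P2), (P3), the condition `σ_j σ_i (S_j) = S_i` and the PBW conditions
(P4)–(P8), the identities
(a) `σ_i(S_j)·S_i + ρ_i(S_j) = S_i·S_j`,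
(b) `σ_i(S_j·S_i) = S_j·σ_i(S_j) + σ_i(ρ_j(S_i))`,
(c) `ρ_i(S_j·S_i) = S_j·ρ_i(S_j) + ρ_i(ρ_j(S_i))`
hold in `B^{⊗3}`, for `{i, j} = {1, 2}`. -/
theorem stmt12 (S R : B ⊗[K] B)
    (σ ρ : (B ⊗[K] B) →ₗ[K] (B ⊗[K] B))
    -- (P2)
    (hP2σ : ∀ a b : B ⊗[K] B, σ (a * b) = σ a * σ b)
    (hP2ρ : ∀ a b : B ⊗[K] B, ρ (a * b) = σ a * ρ b + ρ a * b)
    -- (P3)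
    (hP3a : σ S * S + ρ S + σ R = S * S + R)
    (hP3b : ρ R + σ S * R = S * R)
    -- (P4)
    (hP4a : ∀ x : B ⊗[K] B, σ (σ x) * S + ρ (σ x) + σ (ρ x) = S * σ x)
    (hP4b : ∀ x : B ⊗[K] B, σ (σ x) * R + ρ (ρ x) = S * ρ x + R * x) :
    ∀ σi ρi : Fin 2 → ((B ⊗[K] (B ⊗[K] B)) →ₗ[K] (B ⊗[K] (B ⊗[K] B))),
    ∀ Si Ri : Fin 2 → B ⊗[K] (B ⊗[K] B),
      σi = ![act1 K B σ, act2 K B σ] →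
      ρi = ![act1 K B ρ, act2 K B ρ] →
      Si = ![el1 K B S, el2 K B S] →
      Ri = ![el1 K B R, el2 K B R] →
      -- (P5)
      (∀ i j : Fin 2, i ≠ j →
        (∀ x, σi i (σi j (σi i x)) = σi j (σi i (σi j x))) ∧
        (∀ x, ρi i (σi j (σi i x)) = σi j (σi i (ρi j x)))) →
      -- (P6)
      (∀ i j : Fin 2, i ≠ j → ∀ x,
        ρi i (σi j (ρi i x))
          = σi j (ρi i (σi j x)) * Si j + ρi j (ρi i (σi j x)) + σi j (ρi i (ρi j x))) →
      -- (P7)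
      (∀ i j : Fin 2, i ≠ j → ∀ x,
        ρi i (ρi j (ρi i x)) + σi i (ρi j (σi i x)) * Ri i
          = ρi j (ρi i (ρi j x)) + σi j (ρi i (σi j x)) * Ri j) →
      -- (P8)
      (∀ i j : Fin 2, i ≠ j →
        Si i = σi j (σi i (Si j)) ∧ Ri i = σi j (σi i (Ri j)) ∧
        ρi j (σi i (Si j)) = 0 ∧ ρi j (σi i (Ri j)) = 0) →
      ∀ i j : Fin 2, i ≠ j →
        -- (a)
        (σi i (Si j) * Si i + ρi i (Si j) = Si i * Si j) ∧
        -- (b)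
        (σi i (Si j * Si i) = Si j * σi i (Si j) + σi i (ρi j (Si i))) ∧
        -- (c)
        (ρi i (Si j * Si i) = Si j * ρi i (Si j) + ρi i (ρi j (Si i))) := by
  intro σi ρi Si Ri hσi hρi hSi hRi _hP5 _hP6 _hP7 hP8 i j hij
  have hmul : ∀ k : Fin 2, ∀ x y, σi k (x * y) = σi k x * σi k y := by
    intro k
    fin_cases k <;>
      simp only [hσi, Matrix.cons_val_zero, Matrix.cons_val_one, Matrix.head_cons]
    · exact Stmt12Aux.act1_mul σ hP2σ
    · exact Stmt12Aux.act2_mul σ hP2σ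
  have hder : ∀ k : Fin 2, ∀ x y, ρi k (x * y) = σi k x * ρi k y + ρi k x * y := by
    intro k
    fin_cases k <;>
      simp only [hσi, hρi, Matrix.cons_val_zero, Matrix.cons_val_one, Matrix.head_cons]
    · exact Stmt12Aux.act1_rho σ ρ hP2ρ
    · exact Stmt12Aux.act2_rho σ ρ hP2ρ
  have hP4' : ∀ k : Fin 2, ∀ x,
      σi k (σi k x) * Si k + ρi k (σi k x) + σi k (ρi k x) = Si k * σi k x := by
    intro k
    fin_cases k <;>
      simp only [hσi, hρi, hSi, Matrix.cons_val_zero, Matrix.cons_val_one, Matrix.head_cons]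
    · exact Stmt12Aux.act1_P4 σ ρ S hP4a
    · exact Stmt12Aux.act2_P4 σ ρ S hP4a
  obtain ⟨hS1, -, hz1, -⟩ := hP8 i j hij
  obtain ⟨hS2, -, hz2, -⟩ := hP8 j i hij.symm
  have ha : σi i (Si j) * Si i + ρi i (Si j) = Si i * Si j :=
    Stmt12Aux.keyA (hP4' i) hS2 hz2
  have ha' : σi j (Si i) * Si j + ρi j (Si i) = Si j * Si i :=
    Stmt12Aux.keyA (hP4' j) hS1 hz1
  exact ⟨ha, Stmt12Aux.keyB (hmul i) ha' hS2, Stmt12Aux.keyC (hder i) ha' hS2 hz2⟩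

end
end

section
/- Let F ⊇ F' be rings such that F is projective as a left F'-module, and let both F and F' be symmetric algebras over a field K. Then for every F'-module N, the induced module F ⊗_{F'} N is naturally isomorphic to the coinduced module Hom_{F'}(F, N) as F-modules. -/
section Coinduced

variable {K F : Type} [Field K] [Ring F] [Algebra K F] (F' : Subalgebra K F)
variable (N : Type) [AddCommGroup N] [Module ↥F' N]

/-- The element `x * a ∈ F`, viewed via right multiplication; `F` is a left
`F'`-module and right multiplication by `a` is `F'`-linear. -/
def rmul (a : F) : F →ₗ[↥F'] F where
  toFun x := x * a
  map_add' x y := add_mul x y a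
  map_smul' c x := by
    simp only [RingHom.id_apply]
    show ((c : F) * x) * a = (c : F) * (x * a)
    exact mul_assoc _ _ _

/-- The left `F`-module structure on the coinduced module
`Hom_{F'}(F, N)`: `(a • φ)(x) = φ(x * a)`. -/
noncomputable instance coindModule : Module F (F →ₗ[↥F'] N) where
  smul a φ := φ.comp (rmul F' a)
  one_smul φ := by
    apply LinearMap.ext; intro x
    show φ (x * 1) = φ x
    rw [mul_one]
  mul_smul a b φ := by
    apply LinearMap.ext; intro x
    show φ (x * (a * b)) = φ ((x * a) * b)
    rw [mul_assoc]
  smul_zero a := rfl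
  smul_add a φ ψ := rfl
  add_smul a b φ := by
    apply LinearMap.ext; intro x
    show φ (x * (a + b)) = φ (x * a) + φ (x * b)
    rw [mul_add, map_add]
  zero_smul φ := by
    apply LinearMap.ext; intro x
    show φ (x * 0) = 0
    rw [mul_zero, map_zero]

end Coinduced

section SymAux

variable {K : Type} [Field K]

private def pairing (R : Type) [Ring R] [Algebra K R] (l : R →ₗ[K] K) :
    R →ₗ[K] Module.Dual K R where
  toFun x := l ∘ₗ LinearMap.mulRight K x
  map_add' x y := by ext b; simp [mul_add]
  map_smul' c x := by ext b; simp [mul_smul_comm]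

private lemma pairing_bijective (R : Type) [Ring R] [Algebra K R] [FiniteDimensional K R]
    (l : R →ₗ[K] K) (hsym : ∀ a b : R, l (a * b) = l (b * a))
    (hnd : ∀ a : R, (∀ b : R, l (a * b) = 0) → a = 0) :
    Function.Bijective (pairing R l) := by
  have hinj : Function.Injective (pairing R l) := by
    intro x y h
    have h0 : ∀ b, l ((x - y) * b) = 0 := by
      intro b
      have hb : l (b * x) = l (b * y) := congrArg (fun f => f b) h
      rw [sub_mul, map_sub, hsym x b, hsym y b, hb, sub_self]
    exact sub_eq_zero.mp (hnd _ h0)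
  exact ⟨hinj, (LinearMap.injective_iff_surjective_of_finrank_eq_finrank
    Subspace.dual_finrank_eq.symm).mp hinj⟩

private def lmulFunc {F : Type} [Ring F] [Algebra K F] (F' : Subalgebra K F)
    (lF : F →ₗ[K] K) : F →ₗ[K] Module.Dual K ↥F' where
  toFun x := lF ∘ₗ (LinearMap.mulLeft K x) ∘ₗ F'.val.toLinearMap
  map_add' x y := by ext c; simp [add_mul]
  map_smul' k x := by ext c; simp [smul_mul_assoc]

end SymAux

set_option maxHeartbeats 1000000 in
/-- let `F ⊇ F'` with `F` projective as a left `F'`-module and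
both `F` and `F'` symmetric algebras over a field `K` (symmetry expressed by a
nondegenerate symmetrizing trace form).  Then for every `F'`-module `N` the
induced module `F ⊗_{F'} N` is naturally isomorphic to the coinduced module
`Hom_{F'}(F, N)` as `F`-modules; equivalently, the coinduced module
`Hom_{F'}(F, N)` satisfies the universal property of the induced module. -/
theorem stmt15 (K F : Type) [Field K] [Ring F] [Algebra K F] [FiniteDimensional K F]
    (F' : Subalgebra K F)
    (hproj : Module.Projective ↥F' F)
    (lF : F →ₗ[K] K) (hFsym : ∀ a b : F, lF (a * b) = lF (b * a))
    (hFnd : ∀ a : F, (∀ b : F, lF (a * b) = 0) → a = 0)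
    (lF' : ↥F' →ₗ[K] K) (hF'sym : ∀ a b : ↥F', lF' (a * b) = lF' (b * a))
    (hF'nd : ∀ a : ↥F', (∀ b : ↥F', lF' (a * b) = 0) → a = 0)
    (N : Type) [AddCommGroup N] [Module ↥F' N] :
    ∃ ι : N →ₗ[↥F'] (F →ₗ[↥F'] N),
      ∀ (Q : Type) (_ : AddCommGroup Q) (_ : Module F Q) (f : N →ₗ[↥F'] Q),
        ∃! g : (F →ₗ[↥F'] N) →ₗ[F] Q, ∀ x : N, g (ι x) = f x := by
  classical
  haveI := hproj
  -- injectivity of the F'-pairing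
  have hinj' : ∀ a b : ↥F', (∀ c : ↥F', lF' (a * c) = lF' (b * c)) → a = b := by
    intro a b h
    have h0 : ∀ c, lF' ((a - b) * c) = 0 := fun c => by
      rw [sub_mul, map_sub, h c, sub_self]
    exact sub_eq_zero.mp (hF'nd _ h0)
  let e' : ↥F' ≃ₗ[K] Module.Dual K ↥F' :=
    LinearEquiv.ofBijective _ (pairing_bijective ↥F' lF' hF'sym hF'nd)
  let eF : F ≃ₗ[K] Module.Dual K F :=
    LinearEquiv.ofBijective _ (pairing_bijective F lF hFsym hFnd)
  set lam : F →ₗ[K] ↥F' := e'.symm.toLinearMap ∘ₗ lmulFunc F' lF with hlamdef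
  have hkey : ∀ (z : F) (d : ↥F'), lF' (lam z * d) = lF (z * (d : F)) := by
    intro z d
    have h1 : pairing ↥F' lF' (lam z) = lmulFunc F' lF z := e'.apply_symm_apply _
    have h2 : lF' (d * lam z) = lF (z * (d : F)) := congrArg (fun f => f d) h1
    rw [hF'sym]; exact h2
  have lam_right : ∀ (z : F) (c : ↥F'), lam (z * (c : F)) = lam z * c := by
    intro z c
    apply hinj'
    intro d
    calc lF' (lam (z * (c : F)) * d) = lF ((z * (c : F)) * (d : F)) := hkey _ _
      _ = lF (z * ((c * d : ↥F') : F)) := by push_cast; rw [mul_assoc]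
      _ = lF' (lam z * (c * d)) := (hkey _ _).symm
      _ = lF' ((lam z * c) * d) := by rw [mul_assoc]
  have lam_left : ∀ (z : F) (c : ↥F'), lam ((c : F) * z) = c * lam z := by
    intro z c
    apply hinj'
    intro d
    calc lF' (lam ((c : F) * z) * d) = lF (((c : F) * z) * (d : F)) := hkey _ _
      _ = lF ((c : F) * (z * (d : F))) := by rw [mul_assoc]
      _ = lF ((z * (d : F)) * (c : F)) := hFsym _ _
      _ = lF (z * ((d * c : ↥F') : F)) := by push_cast; rw [mul_assoc]
      _ = lF' (lam z * (d * c)) := (hkey _ _).symm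
      _ = lF' ((c * lam z) * d) := by rw [← mul_assoc, hF'sym, ← mul_assoc]
  -- surjectivity onto F'-linear functionals
  have hsurj : ∀ φ : F →ₗ[↥F'] ↥F', ∃ z : F, ∀ b, lam (b * z) = φ b := by
    intro φ
    have hsm : ∀ (k : K) (b : F), φ (k • b) = k • φ b := by
      intro k b
      rw [← algebraMap_smul ↥F' k b, map_smul, algebraMap_smul]
    set ψ : Module.Dual K F :=
      { toFun := fun b => lF' (φ b)
        map_add' := fun b c => by
          show lF' (φ (b + c)) = lF' (φ b) + lF' (φ c)
          rw [map_add, map_add]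
        map_smul' := fun k b => by
          show lF' (φ (k • b)) = k • lF' (φ b)
          rw [hsm, map_smul] } with hψdef
    refine ⟨eF.symm ψ, ?_⟩
    have hx : ∀ b, lF (b * eF.symm ψ) = lF' (φ b) := by
      intro b
      have h1 : pairing F lF (eF.symm ψ) = ψ := eF.apply_symm_apply ψ
      exact congrArg (fun f => f b) h1
    intro b
    apply hinj'
    intro d
    calc lF' (lam (b * eF.symm ψ) * d) = lF ((b * eF.symm ψ) * (d : F)) := hkey _ _
      _ = lF (((d : F) * b) * eF.symm ψ) := by rw [hFsym, ← mul_assoc]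
      _ = lF' (φ ((d : F) * b)) := hx _
      _ = lF' (d • φ b) := by rw [show ((d : F) * b) = d • b from rfl, map_smul]
      _ = lF' (φ b * d) := hF'sym _ _
  -- dual bases from projectivity and finiteness
  haveI : Module.Finite ↥F' F := Module.Finite.of_restrictScalars_finite K ↥F' F
  obtain ⟨n, v, hv⟩ := Module.Finite.exists_fin (R := ↥F') (M := F)
  have hπ : Function.Surjective (Finsupp.linearCombination ↥F' v) := by
    apply LinearMap.range_eq_top.mp
    rw [Finsupp.range_linearCombination, hv]
  obtain ⟨σ, hσ⟩ := Module.projective_lifting_property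
    (Finsupp.linearCombination ↥F' v) LinearMap.id hπ
  have hrep : ∀ b : F, ∑ i, (σ b i) • v i = b := by
    intro b
    have h1 : Finsupp.linearCombination ↥F' v (σ b) = b := congrArg (fun f => f b) hσ
    rw [Finsupp.linearCombination_apply] at h1
    have h2 := Finsupp.sum_fintype (σ b) (fun i a => a • v i) (fun i => zero_smul _ _)
    rw [h2] at h1
    exact h1
  choose x hx using fun i : Fin n => hsurj ((Finsupp.lapply i) ∘ₗ σ)
  have hx' : ∀ (i : Fin n) (b : F), lam (b * x i) = σ b i := fun i b => hx i b
  -- identity (B), smul form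
  have hBs : ∀ b : F, ∑ i, lam (b * x i) • v i = b := by
    intro b
    calc ∑ i, lam (b * x i) • v i = ∑ i, (σ b i) • v i := by
          exact Finset.sum_congr rfl fun i _ => by rw [hx']
      _ = b := hrep b
  -- identity (B), mul form
  have hB : ∀ b : F, ∑ i, ((lam (b * x i) : ↥F') : F) * v i = b := fun b => hBs b
  -- identity (A)
  have hA : ∀ b : F, ∑ i, x i * ((lam (v i * b) : ↥F') : F) = b := by
    intro b
    have h0 : ∀ c : F, lF ((∑ i, x i * ((lam (v i * b) : ↥F') : F) - b) * c) = 0 := by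
      intro c
      rw [sub_mul, map_sub, sub_eq_zero]
      calc lF ((∑ i, x i * ((lam (v i * b) : ↥F') : F)) * c)
          = ∑ i, lF ((x i * ((lam (v i * b) : ↥F') : F)) * c) := by
            rw [Finset.sum_mul, map_sum]
        _ = ∑ i, lF ((v i * b) * ((lam (c * x i) : ↥F') : F)) := by
            refine Finset.sum_congr rfl fun i _ => ?_
            calc lF ((x i * ((lam (v i * b) : ↥F') : F)) * c)
                = lF ((c * x i) * ((lam (v i * b) : ↥F') : F)) := by
                  rw [hFsym, ← mul_assoc]
              _ = lF' (lam (c * x i) * lam (v i * b)) := (hkey _ _).symm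
              _ = lF' (lam (v i * b) * lam (c * x i)) := hF'sym _ _
              _ = lF ((v i * b) * ((lam (c * x i) : ↥F') : F)) := hkey _ _
        _ = ∑ i, lF (b * (((lam (c * x i) : ↥F') : F) * v i)) := by
            refine Finset.sum_congr rfl fun i _ => ?_
            rw [mul_assoc, hFsym, mul_assoc]
        _ = lF (b * ∑ i, ((lam (c * x i) : ↥F') : F) * v i) := by
            rw [← map_sum, ← Finset.mul_sum]
        _ = lF (b * c) := by rw [hB c]
    exact sub_eq_zero.mp (hFnd _ h0)
  -- the map ι
  let ι0 : N →ₗ[↥F'] (F →ₗ[↥F'] N) :=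
    { toFun := fun m =>
        { toFun := fun b => lam b • m
          map_add' := fun b b' => by
            show lam (b + b') • m = lam b • m + lam b' • m
            rw [map_add, add_smul]
          map_smul' := fun c b => by
            show lam ((c : F) * b) • m = c • (lam b • m)
            rw [lam_left, mul_smul] }
      map_add' := fun m m' => LinearMap.ext fun b => smul_add (lam b) m m'
      map_smul' := fun c m => LinearMap.ext fun b => by
        show lam b • (c • m) = lam (b * (c : F)) • m
        rw [lam_right, mul_smul] }
  refine ⟨ι0, ?_⟩
  intro Q _ _ f
  have hφf : ∀ (φ : F →ₗ[↥F'] N) (w : F),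
      f (φ w) = ∑ j, lam (w * x j) • f (φ (v j)) := by
    intro φ w
    conv_lhs => rw [← hBs w]
    rw [map_sum, map_sum]
    exact Finset.sum_congr rfl fun j _ => by rw [map_smul, map_smul]
  let g0 : (F →ₗ[↥F'] N) →ₗ[F] Q :=
    { toFun := fun φ => ∑ i, x i • f (φ (v i))
      map_add' := fun φ ψ => by
        show ∑ i, x i • f ((φ + ψ) (v i)) = _
        simp only [LinearMap.add_apply, map_add, smul_add, Finset.sum_add_distrib]
      map_smul' := fun a φ => by
        show ∑ i, x i • f ((a • φ) (v i)) = a • ∑ i, x i • f (φ (v i))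
        calc ∑ i, x i • f ((a • φ) (v i))
            = ∑ i, x i • ∑ j, lam ((v i * a) * x j) • f (φ (v j)) := by
              refine Finset.sum_congr rfl fun i _ => ?_
              rw [show (a • φ) (v i) = φ (v i * a) from rfl, hφf]
          _ = ∑ i, ∑ j, (x i * ((lam ((v i * a) * x j) : ↥F') : F)) • f (φ (v j)) := by
              refine Finset.sum_congr rfl fun i _ => ?_
              rw [Finset.smul_sum]
              refine Finset.sum_congr rfl fun j _ => ?_
              show x i • (((lam ((v i * a) * x j) : ↥F') : F) • f (φ (v j))) = _
              rw [smul_smul]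
          _ = ∑ j, (∑ i, x i * ((lam (v i * (a * x j)) : ↥F') : F)) • f (φ (v j)) := by
              rw [Finset.sum_comm]
              refine Finset.sum_congr rfl fun j _ => ?_
              rw [Finset.sum_smul]
              exact Finset.sum_congr rfl fun i _ => by rw [mul_assoc]
          _ = ∑ j, (a * x j) • f (φ (v j)) := by
              refine Finset.sum_congr rfl fun j _ => ?_
              rw [hA (a * x j)]
          _ = a • ∑ j, x j • f (φ (v j)) := by
              rw [Finset.smul_sum]
              exact Finset.sum_congr rfl fun j _ => by rw [mul_smul] }
  refine ⟨g0, ?_, ?_⟩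
  · -- g0 ∘ ι0 = f
    intro m
    show ∑ i, x i • f (lam (v i) • m) = f m
    calc ∑ i, x i • f (lam (v i) • m)
        = ∑ i, (x i * ((lam (v i) : ↥F') : F)) • f m := by
          refine Finset.sum_congr rfl fun i _ => ?_
          rw [map_smul]
          show x i • (((lam (v i) : ↥F') : F) • f m) = _
          rw [smul_smul]
      _ = (∑ i, x i * ((lam (v i) : ↥F') : F)) • f m := (Finset.sum_smul).symm
      _ = f m := by
          have h1 := hA 1
          simp only [mul_one] at h1
          rw [h1, one_smul]
  · -- uniqueness
    intro g' hg'
    apply LinearMap.ext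
    intro φ
    have hφrep : φ = ∑ i, x i • (ι0 (φ (v i))) := by
      apply LinearMap.ext
      intro b
      rw [LinearMap.sum_apply]
      have heval : ∀ i : Fin n, (x i • (ι0 (φ (v i)))) b = lam (b * x i) • φ (v i) :=
        fun i => rfl
      rw [Finset.sum_congr rfl fun i _ => heval i]
      conv_lhs => rw [← hBs b]
      rw [map_sum]
      exact Finset.sum_congr rfl fun i _ => map_smul φ _ _
    show g' φ = ∑ i, x i • f (φ (v i))
    conv_lhs => rw [hφrep]
    rw [map_sum]
    exact Finset.sum_congr rfl fun i _ => by rw [map_smul, hg']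
end

section
/- Let S be a finite-dimensional K-algebra, e ∈ S an idempotent, G(N) = Hom_{eSe}(eS, N), and suppose Y is an indecomposable eSe-module such that every composition factor of the socle of G(Y) is not annihilated by e. Then G(Y) is an indecomposable S-module. -/
namespace Stmt19Aux

variable {S : Type} [Ring S] {e : S} (he : e * e = e)
variable {Y : Type} [AddCommGroup Y] [Module (Corner he) Y]

/-- Helper to build an element of `Corner he` without unfolding the definition. -/
def mkCorner (x : S) (h : e * x * e = x) : Corner he := ⟨x, h⟩

theorem es_mem (s : ES (e := e)) : e * s.1 = s.1 := by
  have h : e • s.1 = s.1 := s.2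
  rwa [smul_eq_mul] at h

include he in
theorem corner_pf (s : ES (e := e)) : e * (s.1 * e) * e = s.1 * e := by
  rw [← mul_assoc, es_mem s, mul_assoc, he]

/-- The element `e ∈ eS`. -/
def eps : ES (e := e) := ⟨e, show e • e = e by rw [smul_eq_mul, he]⟩

theorem smul_apply (a : S) (φ : SchurG he Y) (s : ES (e := e)) :
    (a • φ) s = φ (s.mulRight a) := rfl

theorem corner_smul_eps (c : Corner he) :
    c • eps he = (⟨c.1, show e • c.1 = c.1 by
      rw [smul_eq_mul]; exact Corner.e_mul c⟩ : ES (e := e)) := by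
  apply Subtype.ext
  show c.1 • e = c.1
  rw [smul_eq_mul, Corner.mul_e c]

theorem smul_eval (φ : SchurG he Y) (s : ES (e := e)) :
    (s.1 • φ) (eps he) = φ s := by
  rw [smul_apply]
  congr 1
  apply Subtype.ext
  show e * s.1 = s.1
  exact es_mem s

theorem e_smul_eval (φ : SchurG he Y) : (e • φ) (eps he) = φ (eps he) := by
  rw [smul_apply]
  congr 1
  apply Subtype.ext
  show e * e = e
  exact he

theorem e_smul_eq_zero (φ : SchurG he Y) (h : φ (eps he) = 0) : e • φ = 0 := by
  apply LinearMap.ext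
  intro s
  rw [smul_apply, LinearMap.zero_apply]
  have h2 : s.mulRight e = mkCorner he (s.1 * e) (corner_pf he s) • eps he := by
    rw [corner_smul_eps]
    exact Subtype.ext rfl
  rw [h2, map_smul, h, smul_zero]

/-- The `eSe`-submodule `{ φ(e) | φ ∈ p }` of `Y`. -/
def evSub (p : Submodule S (SchurG he Y)) : Submodule (Corner he) Y where
  carrier := {y | ∃ φ ∈ p, φ (eps he) = y}
  zero_mem' := ⟨0, p.zero_mem, rfl⟩
  add_mem' := by
    rintro a b ⟨φ, hφ, rfl⟩ ⟨ψ, hψ, rfl⟩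
    exact ⟨φ + ψ, p.add_mem hφ hψ, rfl⟩
  smul_mem' := by
    rintro c y ⟨φ, hφ, rfl⟩
    refine ⟨c.1 • φ, p.smul_mem _ hφ, ?_⟩
    rw [smul_apply]
    have h2 : (eps he).mulRight c.1 = c • eps he := by
      rw [corner_smul_eps]
      apply Subtype.ext
      show e * c.1 = c.1
      exact Corner.e_mul c
    rw [h2, map_smul]

theorem evSub_bot (p : Submodule S (SchurG he Y))
    (h : evSub he p = ⊥) : p = ⊥ := by
  rw [Submodule.eq_bot_iff] at h ⊢
  intro φ hφ
  apply LinearMap.ext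
  intro s
  rw [LinearMap.zero_apply, ← smul_eval he φ s]
  exact h _ ⟨s.1 • φ, p.smul_mem _ hφ, rfl⟩

/-- The element of `G(Y)` with `φ(s) = (se) • y`. -/
def phiOf (y : Y) : SchurG he Y where
  toFun s := mkCorner he (s.1 * e) (corner_pf he s) • y
  map_add' s t := by
    have hc : mkCorner he ((s + t).1 * e) (corner_pf he (s + t)) =
        mkCorner he (s.1 * e) (corner_pf he s) + mkCorner he (t.1 * e) (corner_pf he t) :=
      Subtype.ext (add_mul s.1 t.1 e)
    show mkCorner he ((s + t).1 * e) (corner_pf he (s + t)) • y = _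
    rw [hc, add_smul]
  map_smul' c s := by
    have hc : mkCorner he ((c • s).1 * e) (corner_pf he (c • s)) =
        c * mkCorner he (s.1 * e) (corner_pf he s) := by
      apply Subtype.ext
      show (c.1 • s.1) * e = c.1 * (s.1 * e)
      rw [smul_eq_mul, mul_assoc]
    show mkCorner he ((c • s).1 * e) (corner_pf he (c • s)) • y = _
    rw [hc, mul_smul, RingHom.id_apply]

theorem phiOf_eps (y : Y) : phiOf he y (eps he) = y := by
  show mkCorner he ((eps he).1 * e) (corner_pf he (eps he)) • y = y
  have h1 : mkCorner he ((eps he).1 * e) (corner_pf he (eps he)) = 1 :=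
    Subtype.ext (show e * e = e from he)
  rw [h1, one_smul]

end Stmt19Aux

/-- let `S` be a finite-dimensional `K`-algebra, `e ∈ S` an
idempotent, `G(N) = Hom_{eSe}(eS, N)`, and let `Y` be an indecomposable
`eSe`-module such that every composition factor of the socle of `G(Y)` is not
annihilated by `e` (equivalently: every simple submodule `L` of `G(Y)` is not
annihilated by `e`).  Then `G(Y)` is an indecomposable `S`-module. -/
theorem stmt19 (K S : Type) [Field K] [Ring S] [Algebra K S] [FiniteDimensional K S]
    (e : S) (he : e * e = e)
    (Y : Type) [AddCommGroup Y] [Module (Corner he) Y]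
    (hYne : ¬ Subsingleton Y)
    (hYindec : ∀ p q : Submodule (Corner he) Y, IsCompl p q → p = ⊥ ∨ q = ⊥)
    (hsocle : ∀ L : Submodule S (SchurG he Y), IsSimpleModule S ↥L →
      ∃ m ∈ L, e • m ≠ 0) :
    ¬ Subsingleton (SchurG he Y) ∧
      ∀ p q : Submodule S (SchurG he Y), IsCompl p q → p = ⊥ ∨ q = ⊥ := by
  open Stmt19Aux in
  constructor
  · rw [not_subsingleton_iff_nontrivial] at hYne ⊢
    obtain ⟨y, hy⟩ := exists_ne (0 : Y)
    refine ⟨phiOf he y, 0, fun h => hy ?_⟩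
    have := congrArg (fun φ => φ (eps he)) h
    simpa [phiOf_eps] using this
  · intro p q hpq
    have hdisj : ∀ y, y ∈ evSub he p → y ∈ evSub he q → y = 0 := by
      rintro y ⟨φ, hφ, rfl⟩ ⟨ψ, hψ, hψy⟩
      have hz : (φ - ψ) (eps he) = 0 := by
        rw [LinearMap.sub_apply, hψy, sub_self]
      have h0 : e • (φ - ψ) = 0 := e_smul_eq_zero he _ hz
      have heq : e • φ = e • ψ := by
        rw [smul_sub] at h0
        exact sub_eq_zero.mp h0
      have hmem : e • φ ∈ p ⊓ q := ⟨p.smul_mem e hφ, heq ▸ q.smul_mem e hψ⟩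
      rw [hpq.inf_eq_bot, Submodule.mem_bot] at hmem
      have : (e • φ) (eps he) = 0 := by rw [hmem]; rfl
      rwa [e_smul_eval] at this
    have hcompl : IsCompl (evSub he p) (evSub he q) := by
      constructor
      · rw [disjoint_iff, Submodule.eq_bot_iff]
        intro y hy
        exact hdisj y hy.1 hy.2
      · rw [codisjoint_iff, eq_top_iff]
        intro y _
        have htop : phiOf he y ∈ p ⊔ q := by
          rw [hpq.sup_eq_top]; trivial
        rw [Submodule.mem_sup] at htop
        obtain ⟨φ, hφ, ψ, hψ, hsum⟩ := htop
        rw [Submodule.mem_sup]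
        refine ⟨φ (eps he), ⟨φ, hφ, rfl⟩, ψ (eps he), ⟨ψ, hψ, rfl⟩, ?_⟩
        rw [← LinearMap.add_apply, hsum, phiOf_eps]
    rcases hYindec _ _ hcompl with h | h
    · exact Or.inl (evSub_bot he p h)
    · exact Or.inr (evSub_bot he q h)
end
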